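/- Consider the one-dimensional symmetric exclusion process with a nearest-neighbour perturbation: configurations are η : ZMod N → {0,1}, α is a real parameter, and the instantaneous current across (x, x+1) is j_η(x, x+1) = (η(x) − η(x+1)) + α (η(x) − η(x+1)) η(x−1) (occupation numbers regarded as real numbers). Define h(η) := −η(0) + α ∑_{x=1}^{N−1} (x/N)(η(x̄) − η(x̄+1)) η(x̄−1) and C(η) := (α/N) ∑_{x ∈ ZMod N} (η(x) − η(x+1)) η(x−1), where x̄ is the class of x in ZMod N. Then for every configuration η and every x ∈ ZMod N, j_η(x, x+1) = τ_{x+1}h(η) − τ_x h(η) + C(η). -/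

import Mathlib

open Finset

lemma zmod_sum_range {N : ℕ} [NeZero N] (f : ZMod N → ℝ) :
    ∑ y : ZMod N, f y = ∑ m ∈ Finset.range N, f (m : ZMod N) := by
  refine (Finset.sum_nbij' (fun y => y.val) (fun m => (m : ZMod N)) ?_ ?_ ?_ ?_ ?_)
  · intro a _; exact Finset.mem_range.mpr (ZMod.val_lt a)
  · intro a _; exact Finset.mem_univ _
  · intro a _; exact ZMod.natCast_zmod_val a
  · intro a ha; exact ZMod.val_cast_of_lt (Finset.mem_range.mp ha)
  · intro a _; rw [ZMod.natCast_zmod_val]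

lemma key {N : ℕ} [NeZero N] (hN : 1 ≤ N) (G : ZMod N → ℝ) (x : ZMod N) :
    ∑ k ∈ Finset.Icc 1 (N-1), ((k:ℝ)/N) * G ((k:ZMod N) + x + 1)
      - ∑ k ∈ Finset.Icc 1 (N-1), ((k:ℝ)/N) * G ((k:ZMod N) + x)
    = G x - (1/N) * ∑ y : ZMod N, G y := by
  have hNne : (N : ℝ) ≠ 0 := Nat.cast_ne_zero.mpr (NeZero.ne N)
  set F : ℕ → ℝ := fun m => G ((m : ZMod N) + x) with hF
  have hsub : N - 1 + 1 = N := Nat.succ_pred_eq_of_pos hN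
  have hIcc : Finset.Icc 1 (N-1) = Finset.Ico 1 N := by
    rw [← Finset.Ico_add_one_right_eq_Icc, hsub]
  have hFN : F N = F 0 := by simp [hF]
  -- rewrite first sum's argument
  have h1 : ∀ k : ℕ, G ((k:ZMod N) + x + 1) = F (k+1) := by
    intro k; simp only [hF]; push_cast; ring_nf
  have h2 : ∀ k : ℕ, G ((k:ZMod N) + x) = F k := fun _ => rfl
  simp only [h1, h2, hIcc, Finset.sum_Ico_eq_sum_range]
  -- now sums over range (N-1)
  set u : ℕ → ℝ := fun i => (((i:ℝ)+1)/N) * F (i+1) with hu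
  have htel : ∑ i ∈ Finset.range (N-1), (u (i+1) - u i) = u (N-1) - u 0 :=
    Finset.sum_range_sub u (N-1)
  have huN : u (N-1) = F 0 := by
    simp only [hu, hsub]
    rw [hFN]
    field_simp
    rw [Nat.cast_sub hN]; push_cast; ring
  have hsplit : ∑ i ∈ Finset.range (N-1), (((1+i:ℕ):ℝ)/N) * F (1+i+1)
      - ∑ i ∈ Finset.range (N-1), (((1+i:ℕ):ℝ)/N) * F (1+i)
      = ∑ i ∈ Finset.range (N-1), (u (i+1) - u i)
        - (1/N) * ∑ i ∈ Finset.range (N-1), F (i+2) := by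
    rw [← Finset.sum_sub_distrib]
    rw [Finset.mul_sum, ← Finset.sum_sub_distrib (f := fun i => u (i+1) - u i)]
    apply Finset.sum_congr rfl
    intro i _
    simp only [hu, show 1+i+1 = i+2 from by omega, show 1+i = i+1 from by omega]
    push_cast
    ring
  have hT : ∑ i ∈ Finset.range (N-1), F (i+2)
      = (∑ m ∈ Finset.range N, F m) - F 1 := by
    have e1 : ∑ m ∈ Finset.range (N+1), F m
        = ∑ i ∈ Finset.range N, F (i+1) + F 0 := Finset.sum_range_succ' F N
    have e2 : ∑ i ∈ Finset.range N, F (i+1)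
        = ∑ i ∈ Finset.range (N-1), F (i+1+1) + F 1 := by
      conv_lhs => rw [← hsub]
      rw [Finset.sum_range_succ' (fun i => F (i+1)) (N-1)]
    have e3 : ∑ m ∈ Finset.range (N+1), F m
        = ∑ m ∈ Finset.range N, F m + F N := Finset.sum_range_succ F N
    have := e1.symm.trans e3
    rw [e2] at this
    rw [hFN] at this
    linarith [this]
  have hsumZ : ∑ y : ZMod N, G y = ∑ m ∈ Finset.range N, F m := by
    rw [show (∑ y : ZMod N, G y) = ∑ y : ZMod N, G (y + x) from
      (Fintype.sum_equiv (Equiv.addRight x) _ _ (fun y => rfl)).symm]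
    rw [zmod_sum_range (fun y => G (y + x))]
  have hF0 : F 0 = G x := by simp [hF]
  rw [hsplit, htel, huN, hT, hsumZ, hF0]
  simp only [hu]
  push_cast
  ring

/-- **Hodge decomposition of the current of a perturbed symmetric exclusion
process in one dimension.** Configurations are `η : ZMod N → {0,1}` (occupation
numbers regarded as reals), `α` is a real parameter, and the instantaneous
current across `(x, x+1)` is
`j_η(x,x+1) = (η(x) - η(x+1)) + α (η(x) - η(x+1)) η(x-1)`.
With `h(η) := -η(0) + α ∑_{x=1}^{N-1} (x/N)(η(x̄) - η(x̄+1)) η(x̄-1)` and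
`C(η) := (α/N) ∑_{x ∈ ZMod N} (η(x) - η(x+1)) η(x-1)`, one has
`j_η(x,x+1) = τ_{x+1}h(η) - τ_x h(η) + C(η)` for every `η` and `x`
(where `τ_x f (η) = f (fun w => η (w + x))`). -/
theorem stmt_5 {N : ℕ} [NeZero N] (hN : 3 ≤ N) (α : ℝ) :
    let ρ : (ZMod N → Fin 2) → ZMod N → ℝ := fun η x => ((η x : ℕ) : ℝ)
    let j : (ZMod N → Fin 2) → ZMod N → ℝ := fun η x =>
      (ρ η x - ρ η (x + 1)) + α * (ρ η x - ρ η (x + 1)) * ρ η (x - 1)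
    let h : (ZMod N → Fin 2) → ℝ := fun η =>
      -(ρ η 0) + α * ∑ k ∈ Finset.Icc 1 (N - 1),
        ((k : ℝ) / N) * ((ρ η (k : ZMod N) - ρ η ((k : ZMod N) + 1)) * ρ η ((k : ZMod N) - 1))
    let C : (ZMod N → Fin 2) → ℝ := fun η =>
      (α / (N : ℝ)) * ∑ x : ZMod N, (ρ η x - ρ η (x + 1)) * ρ η (x - 1)
    ∀ (η : ZMod N → Fin 2) (x : ZMod N),
      j η x = h (fun w => η (w + (x + 1))) - h (fun w => η (w + x)) + C η := by
  intro ρ j h C η x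
  simp only [ρ, j, h, C]
  set G : ZMod N → ℝ := fun y => (((η y : ℕ) : ℝ) - ((η (y+1) : ℕ) : ℝ)) * ((η (y-1) : ℕ) : ℝ)
    with hG
  have e1 : ∑ k ∈ Finset.Icc 1 (N - 1), ((k : ℝ) / N) *
        ((((η ((k:ZMod N) + (x+1)) : ℕ):ℝ) - ((η ((k:ZMod N) + 1 + (x+1)) : ℕ):ℝ)) *
          ((η ((k:ZMod N) - 1 + (x+1)) : ℕ):ℝ))
      = ∑ k ∈ Finset.Icc 1 (N - 1), ((k : ℝ) / N) * G ((k:ZMod N) + x + 1) := by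
    apply Finset.sum_congr rfl
    intro k _
    have a1 : (k:ZMod N) + (x+1) = (k:ZMod N) + x + 1 := by ring
    have a2 : (k:ZMod N) + 1 + (x+1) = ((k:ZMod N) + x + 1) + 1 := by ring
    have a3 : (k:ZMod N) - 1 + (x+1) = ((k:ZMod N) + x + 1) - 1 := by ring
    rw [a1, a2, a3, hG]
  have e2 : ∑ k ∈ Finset.Icc 1 (N - 1), ((k : ℝ) / N) *
        ((((η ((k:ZMod N) + x) : ℕ):ℝ) - ((η ((k:ZMod N) + 1 + x) : ℕ):ℝ)) *
          ((η ((k:ZMod N) - 1 + x) : ℕ):ℝ))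
      = ∑ k ∈ Finset.Icc 1 (N - 1), ((k : ℝ) / N) * G ((k:ZMod N) + x) := by
    apply Finset.sum_congr rfl
    intro k _
    have a2 : (k:ZMod N) + 1 + x = ((k:ZMod N) + x) + 1 := by ring
    have a3 : (k:ZMod N) - 1 + x = ((k:ZMod N) + x) - 1 := by ring
    rw [a2, a3, hG]
  have e3 : ∑ y : ZMod N, (((η y : ℕ):ℝ) - ((η (y+1) : ℕ):ℝ)) * ((η (y-1) : ℕ):ℝ)
      = ∑ y : ZMod N, G y := rfl
  have hkey := key (by omega) G x
  have hGx : G x = (((η x : ℕ):ℝ) - ((η (x+1) : ℕ):ℝ)) * ((η (x-1) : ℕ):ℝ) := rfl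
  simp only [zero_add]
  rw [e1, e2, e3]
  rw [hGx] at hkey
  linear_combination (-α) * hkey
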